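/- arXiv:1905.10497 — 3 statements merged into one kernel-verified Lean document; each statement's English description precedes it below -/
import Mathlib

section
/- Let E be a real Banach space, let f : E → ℝ be twice continuously differentiable with f(x) ≥ 0 for every x, let q be a natural number with q ≥ 1, let w ∈ E, and suppose the operator norm of the second derivative of f at w satisfies ‖D²f(w)‖ ≤ L. Then the second derivative of the function g(x) = (1/(q+1)) · f(x)^{q+1} at w satisfies ‖D²g(w)‖ ≤ L · f(w)^q + q · f(w)^{q-1} · ‖Df(w)‖², where Df(w) denotes the (Fréchet) derivative of f at w. -/
/-- Lemma 1 of the paper (integer-exponent form): if `f : E → ℝ` is a nonnegative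
`C²` function on a real Banach space whose second derivative at `w` has operator norm
at most `L`, then the second derivative of `g = (1/(q+1)) · f^{q+1}` at `w` has operator
norm at most `L·f(w)^q + q·f(w)^{q-1}·‖Df(w)‖²`. -/
theorem qffl_hessian_bound_nat
    {E : Type*} [NormedAddCommGroup E] [NormedSpace ℝ E] [CompleteSpace E]
    (f : E → ℝ) (hf : ContDiff ℝ 2 f) (hf0 : ∀ x, 0 ≤ f x)
    (q : ℕ) (hq : 1 ≤ q) (w : E) (L : ℝ)
    (hL : ‖iteratedFDeriv ℝ 2 f w‖ ≤ L) :
    ‖iteratedFDeriv ℝ 2 (fun x => (1 / (q + 1 : ℝ)) * f x ^ (q + 1)) w‖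
      ≤ L * f w ^ q + q * f w ^ (q - 1) * ‖fderiv ℝ f w‖ ^ 2 := by
  set g : E → ℝ := fun x => (1 / (q + 1 : ℝ)) * f x ^ (q + 1) with hg
  have hfd : Differentiable ℝ f := hf.differentiable (by norm_num)
  -- derivative of g at any point
  have hg1 : ∀ x : E, HasFDerivAt g ((f x ^ q) • fderiv ℝ f x) x := by
    intro x
    have h1 : HasFDerivAt (fun y : E => f y ^ (q + 1))
        (((q + 1 : ℕ) * f x ^ q : ℝ) • fderiv ℝ f x) x := by
      have := (hasDerivAt_pow (q + 1) (f x)).comp_hasFDerivAt x (hfd x).hasFDerivAt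
      exact this
    have h2 : HasFDerivAt (fun y : E => (1 / (q + 1 : ℝ)) * f y ^ (q + 1))
        ((1 / (q + 1 : ℝ)) • (((q + 1 : ℕ) * f x ^ q : ℝ) • fderiv ℝ f x)) x :=
      h1.const_smul (1 / (q + 1 : ℝ))
    have hne : (q + 1 : ℝ) ≠ 0 := by positivity
    convert h2 using 1
    rw [smul_smul]
    congr 1
    push_cast
    field_simp
  have hgd : fderiv ℝ g = fun x => (f x ^ q) • fderiv ℝ f x := by
    funext x; exact (hg1 x).fderiv
  -- second derivative
  have hf' : DifferentiableAt ℝ (fderiv ℝ f) w :=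
    ((hf.fderiv_right (m := 1) le_rfl).differentiable one_ne_zero) w
  have hpow : HasFDerivAt (fun x : E => f x ^ q)
      (((q : ℝ) * f w ^ (q - 1)) • fderiv ℝ f w) w := by
    have := (hasDerivAt_pow q (f w)).comp_hasFDerivAt w (hfd w).hasFDerivAt
    exact this
  have hD : HasFDerivAt (fun x : E => (f x ^ q) • fderiv ℝ f x)
      ((f w ^ q) • fderiv ℝ (fderiv ℝ f) w
        + ((((q : ℝ) * f w ^ (q - 1)) • fderiv ℝ f w).smulRight (fderiv ℝ f w))) w :=
    hpow.smul hf'.hasFDerivAt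
  have hg2 : fderiv ℝ (fderiv ℝ g) w
      = (f w ^ q) • fderiv ℝ (fderiv ℝ f) w
        + ((((q : ℝ) * f w ^ (q - 1)) • fderiv ℝ f w).smulRight (fderiv ℝ f w)) := by
    rw [hgd]; exact hD.fderiv
  -- bound on D²f
  have hL0 : 0 ≤ L := le_trans (norm_nonneg _) hL
  have hbf : ∀ v u : E, ‖fderiv ℝ (fderiv ℝ f) w v u‖ ≤ L * ‖v‖ * ‖u‖ := by
    intro v u
    have h1 : fderiv ℝ (fderiv ℝ f) w v u = iteratedFDeriv ℝ 2 f w ![v, u] := by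
      rw [iteratedFDeriv_two_apply]; simp
    rw [h1]
    calc ‖iteratedFDeriv ℝ 2 f w ![v, u]‖
        ≤ ‖iteratedFDeriv ℝ 2 f w‖ * ∏ i, ‖(![v, u] : Fin 2 → E) i‖ :=
          (iteratedFDeriv ℝ 2 f w).le_opNorm _
      _ ≤ L * ‖v‖ * ‖u‖ := by
          rw [Fin.prod_univ_two]
          simp only [Matrix.cons_val_zero, Matrix.cons_val_one, Matrix.head_cons]
          rw [← mul_assoc]
          gcongr
  -- final bound
  have hC0 : 0 ≤ L * f w ^ q + q * f w ^ (q - 1) * ‖fderiv ℝ f w‖ ^ 2 := by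
    have := hf0 w; positivity
  refine ContinuousMultilinearMap.opNorm_le_bound hC0 fun m => ?_
  rw [iteratedFDeriv_two_apply, hg2, Fin.prod_univ_two]
  set v := m 0; set u := m 1
  have hfw : (0:ℝ) ≤ f w := hf0 w
  simp only [ContinuousLinearMap.add_apply, ContinuousLinearMap.smul_apply,
    ContinuousLinearMap.smulRight_apply, smul_eq_mul]
  have hA : ‖f w ^ q * fderiv ℝ (fderiv ℝ f) w v u‖ ≤ L * f w ^ q * (‖v‖ * ‖u‖) := by
    rw [norm_mul, Real.norm_of_nonneg (by positivity)]
    calc f w ^ q * ‖fderiv ℝ (fderiv ℝ f) w v u‖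
        ≤ f w ^ q * (L * ‖v‖ * ‖u‖) := by
          gcongr
          exact hbf v u
      _ = L * f w ^ q * (‖v‖ * ‖u‖) := by ring
  have hB : ‖(q : ℝ) * f w ^ (q - 1) * fderiv ℝ f w v * fderiv ℝ f w u‖
      ≤ (q : ℝ) * f w ^ (q - 1) * ‖fderiv ℝ f w‖ ^ 2 * (‖v‖ * ‖u‖) := by
    rw [norm_mul, norm_mul, Real.norm_of_nonneg (show (0:ℝ) ≤ (q : ℝ) * f w ^ (q - 1) by positivity)]
    calc (q : ℝ) * f w ^ (q - 1) * ‖fderiv ℝ f w v‖ * ‖fderiv ℝ f w u‖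
        ≤ (q : ℝ) * f w ^ (q - 1) * (‖fderiv ℝ f w‖ * ‖v‖) * (‖fderiv ℝ f w‖ * ‖u‖) := by
          gcongr
          · exact (fderiv ℝ f w).le_opNorm v
          · exact (fderiv ℝ f w).le_opNorm u
      _ = (q : ℝ) * f w ^ (q - 1) * ‖fderiv ℝ f w‖ ^ 2 * (‖v‖ * ‖u‖) := by ring
  calc ‖f w ^ q * fderiv ℝ (fderiv ℝ f) w v u
          + (q : ℝ) * f w ^ (q - 1) * fderiv ℝ f w v * fderiv ℝ f w u‖
      ≤ ‖f w ^ q * fderiv ℝ (fderiv ℝ f) w v u‖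
          + ‖(q : ℝ) * f w ^ (q - 1) * fderiv ℝ f w v * fderiv ℝ f w u‖ := norm_add_le _ _
    _ ≤ L * f w ^ q * (‖v‖ * ‖u‖) + (q : ℝ) * f w ^ (q - 1) * ‖fderiv ℝ f w‖ ^ 2 * (‖v‖ * ‖u‖) :=
        add_le_add hA hB
    _ = (L * f w ^ q + (q : ℝ) * f w ^ (q - 1) * ‖fderiv ℝ f w‖ ^ 2) * (‖v‖ * ‖u‖) := by ring
end

section
/- Let E be a real Banach space, let f : E → ℝ be twice continuously differentiable with f(x) > 0 for every x, let q > 0 be a real number, let w ∈ E, and suppose ‖D²f(w)‖ ≤ L. Then the function g(x) = (1/(q+1)) · f(x)^{q+1} (with real-exponent power) is twice differentiable at w and its second derivative satisfies ‖D²g(w)‖ ≤ L · f(w)^q + q · f(w)^{q-1} · ‖Df(w)‖². -/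
/-- Lemma 1 of the paper (real-exponent form): if `f : E → ℝ` is a strictly positive
`C²` function on a real Banach space whose second derivative at `w` has operator norm
at most `L`, and `q > 0` is real, then `g = (1/(q+1)) · f^{q+1}` (real power) is twice
differentiable at `w` and `‖D²g(w)‖ ≤ L·f(w)^q + q·f(w)^{q-1}·‖Df(w)‖²`. -/
theorem qffl_hessian_bound_rpow
    {E : Type*} [NormedAddCommGroup E] [NormedSpace ℝ E] [CompleteSpace E]
    (f : E → ℝ) (hf : ContDiff ℝ 2 f) (hf0 : ∀ x, 0 < f x)
    (q : ℝ) (hq : 0 < q) (w : E) (L : ℝ)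
    (hL : ‖iteratedFDeriv ℝ 2 f w‖ ≤ L) :
    DifferentiableAt ℝ (fun x => (1 / (q + 1)) * f x ^ (q + 1)) w ∧
    DifferentiableAt ℝ (fderiv ℝ (fun x => (1 / (q + 1)) * f x ^ (q + 1))) w ∧
    ‖iteratedFDeriv ℝ 2 (fun x => (1 / (q + 1)) * f x ^ (q + 1)) w‖
      ≤ L * f w ^ q + q * f w ^ (q - 1) * ‖fderiv ℝ f w‖ ^ 2 := by
  have hfd : Differentiable ℝ f := hf.differentiable (by norm_num)
  have hne : ∀ x, f x ≠ 0 := fun x => (hf0 x).ne'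
  set g : E → ℝ := fun x => (1 / (q + 1)) * f x ^ (q + 1) with hg
  -- derivative of g at any point
  have hgd : ∀ x : E, HasFDerivAt g ((f x ^ q) • fderiv ℝ f x) x := by
    intro x
    have h1 : HasFDerivAt (fun y => f y ^ (q + 1))
        (((q + 1) * f x ^ (q + 1 - 1)) • fderiv ℝ f x) x :=
      (hfd x).hasFDerivAt.rpow_const (Or.inl (hne x))
    have h2 := h1.const_mul (1 / (q + 1))
    have hq1 : q + 1 ≠ 0 := by positivity
    refine h2.congr_fderiv ?_
    rw [smul_smul]
    congr 1
    field_simp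
    ring_nf
  have hgdiff : ∀ x : E, DifferentiableAt ℝ g x := fun x => (hgd x).differentiableAt
  have hfg : fderiv ℝ g = fun x => (f x ^ q) • fderiv ℝ f x := by
    funext x; exact (hgd x).fderiv
  -- derivative of fderiv f at w
  have hDf2 : DifferentiableAt ℝ (fderiv ℝ f) w := by
    have := (hf.fderiv_right (m := 1) (by norm_num)).differentiable (by norm_num)
    exact this w
  have hc : HasFDerivAt (fun x => f x ^ q)
      ((q * f w ^ (q - 1)) • fderiv ℝ f w) w :=
    (hfd w).hasFDerivAt.rpow_const (Or.inl (hne w))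
  have hsmul : HasFDerivAt (fun x => (f x ^ q) • fderiv ℝ f x)
      ((f w ^ q) • fderiv ℝ (fderiv ℝ f) w
        + ((q * f w ^ (q - 1)) • fderiv ℝ f w).smulRight (fderiv ℝ f w)) w :=
    hc.smul hDf2.hasFDerivAt
  have hgd2 : HasFDerivAt (fderiv ℝ g)
      ((f w ^ q) • fderiv ℝ (fderiv ℝ f) w
        + ((q * f w ^ (q - 1)) • fderiv ℝ f w).smulRight (fderiv ℝ f w)) w := by
    rw [hfg]; exact hsmul
  refine ⟨hgdiff w, hgd2.differentiableAt, ?_⟩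
  -- norm computation
  have key : ∀ (h : E → ℝ) (x : E),
      ‖iteratedFDeriv ℝ 2 h x‖ = ‖fderiv ℝ (fderiv ℝ h) x‖ := by
    intro h x
    rw [← norm_iteratedFDeriv_fderiv (n := 1), ← norm_iteratedFDeriv_fderiv (n := 0),
      norm_iteratedFDeriv_zero]
  rw [key]
  rw [hgd2.fderiv]
  have hDfw : ‖fderiv ℝ (fderiv ℝ f) w‖ ≤ L := by rw [← key]; exact hL
  calc ‖(f w ^ q) • fderiv ℝ (fderiv ℝ f) w
        + ((q * f w ^ (q - 1)) • fderiv ℝ f w).smulRight (fderiv ℝ f w)‖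
      ≤ ‖(f w ^ q) • fderiv ℝ (fderiv ℝ f) w‖
        + ‖((q * f w ^ (q - 1)) • fderiv ℝ f w).smulRight (fderiv ℝ f w)‖ :=
        norm_add_le ((f w ^ q) • fderiv ℝ (fderiv ℝ f) w)
          (((q * f w ^ (q - 1)) • fderiv ℝ f w).smulRight (fderiv ℝ f w))
    _ ≤ (f w ^ q) * L + (q * f w ^ (q - 1) * ‖fderiv ℝ f w‖) * ‖fderiv ℝ f w‖ := by
        have e1 : ‖(f w ^ q) • fderiv ℝ (fderiv ℝ f) w‖
            = f w ^ q * ‖fderiv ℝ (fderiv ℝ f) w‖ := by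
          haveI : NormSMulClass ℝ (E →L[ℝ] E →L[ℝ] ℝ) :=
            @NormedSpace.toNormSMulClass ℝ (E →L[ℝ] E →L[ℝ] ℝ) _ _ _
          rw [norm_smul (f w ^ q) (fderiv ℝ (fderiv ℝ f) w), Real.norm_eq_abs,
            abs_of_pos (Real.rpow_pos_of_pos (hf0 w) q)]
        have e2 : ‖((q * f w ^ (q - 1)) • fderiv ℝ f w).smulRight (fderiv ℝ f w)‖
            = (q * f w ^ (q - 1) * ‖fderiv ℝ f w‖) * ‖fderiv ℝ f w‖ := by
          rw [ContinuousLinearMap.norm_smulRight_apply,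
            norm_smul (q * f w ^ (q - 1)) (fderiv ℝ f w), Real.norm_eq_abs,
            abs_of_pos (mul_pos hq (Real.rpow_pos_of_pos (hf0 w) (q - 1)))]
        rw [e1, e2]
        gcongr
        exact (Real.rpow_pos_of_pos (hf0 w) q).le
    _ = L * f w ^ q + q * f w ^ (q - 1) * ‖fderiv ℝ f w‖ ^ 2 := by ring
end

section
/- Let E be a real Banach space, let f : E → ℝ be twice continuously differentiable with f(x) ≥ 0 for all x, and suppose ‖D²f(x)‖ ≤ L for all x. Let q be a natural number with q ≥ 1, let s ⊆ E be a convex set, and suppose there are constants M, G ≥ 0 such that f(x) ≤ M and ‖Df(x)‖ ≤ G for all x ∈ s. Then the derivative map x ↦ D((1/(q+1))·f^{q+1})(x) is Lipschitz on s with Lipschitz constant L·M^q + q·M^{q-1}·G². -/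
set_option maxHeartbeats 1000000
set_option synthInstance.maxHeartbeats 400000

/-- The 'local Lipschitz constant of the gradient' reading of Lemma 1 of the paper:
if `f : E → ℝ` is a nonnegative `C²` function with `‖D²f(x)‖ ≤ L` everywhere,
`q ≥ 1` is a natural number, and on a convex set `s` we have `f ≤ M` and
`‖Df‖ ≤ G` (with `M, G ≥ 0`), then the gradient of `g = (1/(q+1))·f^{q+1}` is
Lipschitz on `s` with constant `L·M^q + q·M^{q-1}·G²`. -/
theorem qffl_gradient_lipschitzOn
    {E : Type*} [NormedAddCommGroup E] [NormedSpace ℝ E] [CompleteSpace E]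
    (f : E → ℝ) (hf : ContDiff ℝ 2 f) (hf0 : ∀ x, 0 ≤ f x)
    (L : ℝ) (hL : ∀ x, ‖iteratedFDeriv ℝ 2 f x‖ ≤ L)
    (q : ℕ) (hq : 1 ≤ q)
    (s : Set E) (hs : Convex ℝ s)
    (M G : ℝ) (hM : 0 ≤ M) (hG : 0 ≤ G)
    (hfM : ∀ x ∈ s, f x ≤ M) (hfG : ∀ x ∈ s, ‖fderiv ℝ f x‖ ≤ G) :
    ∀ x ∈ s, ∀ y ∈ s,
      ‖fderiv ℝ (fun z => (1 / (q + 1 : ℝ)) * f z ^ (q + 1)) x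
          - fderiv ℝ (fun z => (1 / (q + 1 : ℝ)) * f z ^ (q + 1)) y‖
        ≤ (L * M ^ q + q * M ^ (q - 1) * G ^ 2) * ‖x - y‖ := by
  have hdiff : Differentiable ℝ f := hf.differentiable (by norm_num)
  have hdf1 : ContDiff ℝ 1 (fderiv ℝ f) := hf.fderiv_right (m := 1) (by norm_num)
  have hdfd : Differentiable ℝ (fderiv ℝ f) := hdf1.differentiable (by norm_num)
  have hpowd : ∀ (n : ℕ) (x : E),
      HasFDerivAt (fun z => f z ^ n) (((n : ℝ) * f x ^ (n - 1)) • fderiv ℝ f x) x :=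
    fun n x => (hasDerivAt_pow n (f x)).comp_hasFDerivAt x (hdiff x).hasFDerivAt
  have hg : ∀ x, HasFDerivAt (fun z => (1 / (q + 1 : ℝ)) * f z ^ (q + 1))
      (f x ^ q • fderiv ℝ f x) x := by
    intro x
    have h2 := (hpowd (q + 1) x).const_mul (1 / (q + 1 : ℝ))
    have h3 : (1 / (q + 1 : ℝ)) • ((((q + 1 : ℕ) : ℝ) * f x ^ (q + 1 - 1)) • fderiv ℝ f x)
        = f x ^ q • fderiv ℝ f x := by
      rw [smul_smul]
      congr 1
      push_cast
      field_simp
    rw [h3] at h2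
    exact h2
  have hfe : ∀ x, fderiv ℝ (fun z => (1 / (q + 1 : ℝ)) * f z ^ (q + 1)) x
      = f x ^ q • fderiv ℝ f x := fun x => (hg x).fderiv
  have hF : ∀ x : E, HasFDerivAt (fun z => f z ^ q • fderiv ℝ f z)
      (f x ^ q • fderiv ℝ (fderiv ℝ f) x
        + (((q : ℝ) * f x ^ (q - 1)) • fderiv ℝ f x).smulRight (fderiv ℝ f x)) x :=
    fun x => (hpowd q x).smul (hdfd x).hasFDerivAt
  have hbound : ∀ x ∈ s,
      ‖f x ^ q • fderiv ℝ (fderiv ℝ f) x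
        + (((q : ℝ) * f x ^ (q - 1)) • fderiv ℝ f x).smulRight (fderiv ℝ f x)‖
      ≤ L * M ^ q + q * M ^ (q - 1) * G ^ 2 := by
    intro x hx
    haveI := @NormedSpace.toNormSMulClass ℝ (E →L[ℝ] E →L[ℝ] ℝ) _ _ _
    haveI := @NormedSpace.toNormSMulClass ℝ (E →L[ℝ] ℝ) _ _ _
    have hLnn : 0 ≤ L := le_trans (norm_nonneg _) (hL x)
    have hfx : 0 ≤ f x := hf0 x
    have hfxM : f x ≤ M := hfM x hx
    have hd2 : ‖fderiv ℝ (fderiv ℝ f) x‖ ≤ L := by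
      have e1 : ‖iteratedFDeriv ℝ 0 (fderiv ℝ (fderiv ℝ f)) x‖
          = ‖iteratedFDeriv ℝ 1 (fderiv ℝ f) x‖ := norm_iteratedFDeriv_fderiv
      have e2 : ‖iteratedFDeriv ℝ 1 (fderiv ℝ f) x‖ = ‖iteratedFDeriv ℝ 2 f x‖ :=
        norm_iteratedFDeriv_fderiv
      calc ‖fderiv ℝ (fderiv ℝ f) x‖
          = ‖iteratedFDeriv ℝ 0 (fderiv ℝ (fderiv ℝ f)) x‖ := by
            rw [norm_iteratedFDeriv_zero]
        _ = ‖iteratedFDeriv ℝ 2 f x‖ := by rw [e1, e2]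
        _ ≤ L := hL x
    have hpow : ∀ n : ℕ, f x ^ n ≤ M ^ n := fun n => pow_le_pow_left₀ hfx hfxM n
    have hpownn : ∀ n : ℕ, (0:ℝ) ≤ f x ^ n := fun n => pow_nonneg hfx n
    have hdfG : ‖fderiv ℝ f x‖ ≤ G := hfG x hx
    have hn1 : ‖f x ^ q • fderiv ℝ (fderiv ℝ f) x‖ ≤ M ^ q * L := by
      calc ‖f x ^ q • fderiv ℝ (fderiv ℝ f) x‖
          = ‖f x ^ q‖ * ‖fderiv ℝ (fderiv ℝ f) x‖ := by exact norm_smul (f x ^ q) (fderiv ℝ (fderiv ℝ f) x)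
        _ = f x ^ q * ‖fderiv ℝ (fderiv ℝ f) x‖ := by
            rw [Real.norm_of_nonneg (hpownn q)]
        _ ≤ M ^ q * L := mul_le_mul (hpow q) hd2 (norm_nonneg (E := E →L[ℝ] E →L[ℝ] ℝ) _) (pow_nonneg hM q)
    have hn2 : ‖(((q : ℝ) * f x ^ (q - 1)) • fderiv ℝ f x).smulRight (fderiv ℝ f x)‖
        ≤ (q : ℝ) * M ^ (q - 1) * G * G := by
      have e3 : ‖(((q : ℝ) * f x ^ (q - 1)) • fderiv ℝ f x).smulRight (fderiv ℝ f x)‖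
          = ((q : ℝ) * f x ^ (q - 1)) * ‖fderiv ℝ f x‖ * ‖fderiv ℝ f x‖ := by
        rw [ContinuousLinearMap.norm_smulRight_apply]
        congr 1
        calc ‖((q : ℝ) * f x ^ (q - 1)) • fderiv ℝ f x‖
            = ‖(q : ℝ) * f x ^ (q - 1)‖ * ‖fderiv ℝ f x‖ := by exact norm_smul ((q : ℝ) * f x ^ (q - 1)) (fderiv ℝ f x)
          _ = ((q : ℝ) * f x ^ (q - 1)) * ‖fderiv ℝ f x‖ := by
              rw [Real.norm_of_nonneg (mul_nonneg (Nat.cast_nonneg q) (hpownn (q - 1)))]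
      rw [e3]
      have h1 : (q : ℝ) * f x ^ (q - 1) ≤ (q : ℝ) * M ^ (q - 1) :=
        mul_le_mul_of_nonneg_left (hpow (q - 1)) (Nat.cast_nonneg q)
      have h2 : (q : ℝ) * f x ^ (q - 1) * ‖fderiv ℝ f x‖ ≤ (q : ℝ) * M ^ (q - 1) * G :=
        mul_le_mul h1 hdfG (norm_nonneg _)
          (mul_nonneg (Nat.cast_nonneg q) (pow_nonneg hM _))
      exact mul_le_mul h2 hdfG (norm_nonneg _)
        (mul_nonneg (mul_nonneg (Nat.cast_nonneg q) (pow_nonneg hM _)) hG)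
    calc ‖f x ^ q • fderiv ℝ (fderiv ℝ f) x
          + (((q : ℝ) * f x ^ (q - 1)) • fderiv ℝ f x).smulRight (fderiv ℝ f x)‖
        ≤ ‖f x ^ q • fderiv ℝ (fderiv ℝ f) x‖
          + ‖(((q : ℝ) * f x ^ (q - 1)) • fderiv ℝ f x).smulRight (fderiv ℝ f x)‖ :=
          norm_add_le (E := E →L[ℝ] E →L[ℝ] ℝ) _ _
      _ ≤ M ^ q * L + (q : ℝ) * M ^ (q - 1) * G * G := add_le_add hn1 hn2
      _ = L * M ^ q + q * M ^ (q - 1) * G ^ 2 := by ring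
  intro x hx y hy
  rw [hfe x, hfe y]
  exact hs.norm_image_sub_le_of_norm_hasFDerivWithin_le
    (fun z _ => (hF z).hasFDerivWithinAt) hbound hy hx
end
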